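/- For every root α of E8, the pair of integers (r,s) with r = (α, k_1−k_2) and s = (α, k_1+k_2−2k_3) lies in the set {(0,0), (±2,0), (±1,±3), (±1,±1), (0,±2)}, and exactly 27 roots project to each of the six points (±1,±1), (0,±2) (the Magic Star tips), while 72 + 6 roots project to the remaining points. -/
import Mathlib


open Finset
open scoped Classical

noncomputable section

/-- Euclidean inner product on ℝ⁸. -/
def ip (u v : Fin 8 → ℝ) : ℝ := ∑ i, u i * v i

/-- Orthonormal basis vector `k_{i+1}`. -/
def e (i : Fin 8) : Fin 8 → ℝ := Pi.single i 1

/-- Roots `±k_i ± k_j`, `i < j`. -/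
def PhiO : Set (Fin 8 → ℝ) :=
  {v | ∃ i j : Fin 8, i < j ∧ ∃ a b : ℝ, (a = 1 ∨ a = -1) ∧ (b = 1 ∨ b = -1) ∧
    v = a • e i + b • e j}

/-- Spinorial roots `(1/2)(ε₁k₁ + ⋯ + ε₈k₈)`, even number of `+1`. -/
def PhiS : Set (Fin 8 → ℝ) :=
  {v | ∃ ε : Fin 8 → ℝ, (∀ i, ε i = 1 ∨ ε i = -1) ∧
    Even ((univ.filter (fun i => ε i = 1)).card) ∧ v = fun i => ε i / 2}

/-- The E₈ root system. -/
def Phi8 : Set (Fin 8 → ℝ) := PhiO ∪ PhiS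

/-- Magic Star projection coordinates. -/
def rc (α : Fin 8 → ℝ) : ℝ := ip α (e 0 - e 1)
def sc (α : Fin 8 → ℝ) : ℝ := ip α (e 0 + e 1 - (2 : ℝ) • e 2)

/-- The six tips of the Magic Star. -/
def tips : Set (ℝ × ℝ) := {(1,1), (1,-1), (-1,1), (-1,-1), (0,2), (0,-2)}

/-! ### Auxiliary parametrization of the roots -/

def sg (b : Bool) : ℤ := if b then 1 else -1

abbrev TT := ({p : (Fin 8 × Fin 8) × Bool × Bool // p.1.1 < p.1.2}) ⊕
  ({ε : Fin 8 → Bool // Even ((univ.filter (fun i => ε i = true)).card)})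

def N : TT → Fin 8 → ℤ
  | Sum.inl ⟨((i,j),a,b), _⟩ => fun k =>
      (if k = i then 2 * sg a else 0) + (if k = j then 2 * sg b else 0)
  | Sum.inr ⟨ε, _⟩ => fun k => sg (ε k)

def g (t : TT) : Fin 8 → ℝ := fun k => (N t k : ℝ) / 2

def H (t : TT) : ℤ := ∑ k : Fin 8, (N t k + 2) * 5 ^ (k : ℕ)

set_option maxRecDepth 1000000 in
set_option maxHeartbeats 4000000 in
theorem card_im : ((univ : Finset TT).image H).card = 240 := by decide

set_option maxRecDepth 1000000 in
theorem N_inj : Function.Injective N := by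
  have h : ((univ : Finset TT).image H).card = (univ : Finset TT).card := by
    rw [card_im]; decide
  have h2 := Finset.card_image_iff.mp h
  intro a b hab
  exact h2 (by simp) (by simp) (by unfold H; rw [hab])

theorem g_inj : Function.Injective g := by
  intro a b hab
  refine N_inj (funext fun k => ?_)
  have := congrFun hab k
  simp only [g] at this
  field_simp at this
  exact_mod_cast this

theorem rc_apply (α : Fin 8 → ℝ) : rc α = α 0 - α 1 := by
  simp (config := { decide := true }) [rc, ip, e, Fin.sum_univ_eight, Pi.single_apply]
  ring

theorem sc_apply (α : Fin 8 → ℝ) : sc α = α 0 + α 1 - 2 * α 2 := by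
  simp (config := { decide := true }) [sc, ip, e, Fin.sum_univ_eight, Pi.single_apply]
  ring

theorem key (t : TT) (a b : ℤ) :
    (rc (g t), sc (g t)) = ((a : ℝ), (b : ℝ)) ↔
      (N t 0 - N t 1 = 2 * a ∧ N t 0 + N t 1 - 2 * N t 2 = 2 * b) := by
  rw [Prod.mk.injEq, rc_apply, sc_apply]
  show (N t 0 : ℝ)/2 - (N t 1 : ℝ)/2 = a ∧ (N t 0 : ℝ)/2 + (N t 1 : ℝ)/2 - 2 * ((N t 2 : ℝ)/2) = b ↔ _
  constructor
  · rintro ⟨h1, h2⟩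
    constructor
    · exact_mod_cast (show ((N t 0 - N t 1 : ℤ) : ℝ) = ((2 * a : ℤ) : ℝ) by push_cast; linarith)
    · exact_mod_cast (show ((N t 0 + N t 1 - 2 * N t 2 : ℤ) : ℝ) = ((2 * b : ℤ) : ℝ) by push_cast; linarith)
  · rintro ⟨h1, h2⟩
    have h1' : ((N t 0 : ℝ)) - N t 1 = 2 * a := by exact_mod_cast congrArg (Int.cast : ℤ → ℝ) h1
    have h2' : ((N t 0 : ℝ)) + N t 1 - 2 * N t 2 = 2 * b := by
      exact_mod_cast congrArg (Int.cast : ℤ → ℝ) h2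
    constructor <;> linarith

theorem range_g : Set.range g = Phi8 := by
  ext α
  constructor
  · rintro ⟨t, rfl⟩
    match t with
    | Sum.inl ⟨((i,j),a,b), hij⟩ =>
      left
      refine ⟨i, j, hij, (sg a : ℝ), (sg b : ℝ), ?_, ?_, ?_⟩
      · cases a <;> simp [sg]
      · cases b <;> simp [sg]
      · funext k
        simp only [g, N, e, Pi.add_apply, Pi.smul_apply, Pi.single_apply, smul_eq_mul]
        push_cast
        split_ifs <;> ring
    | Sum.inr ⟨ε, hev⟩ =>
      right
      refine ⟨fun i => (sg (ε i) : ℝ), fun i => ?_, ?_, ?_⟩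
      · cases h : ε i
        · right; norm_num [sg, h]
        · left; norm_num [sg, h]
      · convert hev using 2
        refine Finset.filter_congr fun i _ => ?_
        cases h : ε i <;> norm_num [sg, h]
      · funext k
        simp [g, N]
  · rintro (⟨i, j, hij, a, b, ha, hb, rfl⟩ | ⟨ε, hε, hev, rfl⟩)
    · have : ∃ a' b' : Bool, (sg a' : ℝ) = a ∧ (sg b' : ℝ) = b := by
        rcases ha with rfl | rfl <;> rcases hb with rfl | rfl
        · exact ⟨true, true, by norm_num [sg]⟩
        · exact ⟨true, false, by norm_num [sg]⟩
        · exact ⟨false, true, by norm_num [sg]⟩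
        · exact ⟨false, false, by norm_num [sg]⟩
      obtain ⟨a', b', ha', hb'⟩ := this
      refine ⟨Sum.inl ⟨((i,j),a',b'), hij⟩, ?_⟩
      funext k
      simp only [g, N, e, Pi.add_apply, Pi.smul_apply, Pi.single_apply, smul_eq_mul,
        ← ha', ← hb']
      push_cast
      split_ifs <;> ring
    · refine ⟨Sum.inr ⟨fun i => if ε i = 1 then true else false, ?_⟩, ?_⟩
      · convert hev using 2
        refine Finset.filter_congr fun i _ => ?_
        by_cases h : ε i = 1 <;> simp [h]
      · funext k
        by_cases h : ε k = 1
        · simp [g, N, sg, h]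
        · have h' : ε k = -1 := (hε k).resolve_left h
          simp [g, N, sg, h, h']
          norm_num [h']

theorem sep_image (Q : (Fin 8 → ℝ) → Prop) :
    {α ∈ Phi8 | Q α} = g '' {t | Q (g t)} := by
  ext α
  simp only [Set.mem_setOf_eq, Set.mem_image, ← range_g]
  constructor
  · rintro ⟨⟨t, rfl⟩, hQ⟩; exact ⟨t, hQ, rfl⟩
  · rintro ⟨t, hQ, rfl⟩; exact ⟨⟨t, rfl⟩, hQ⟩

theorem tip_count (a b : ℤ) (n : ℕ)
    (h : ((univ : Finset TT).filter
      (fun t => N t 0 - N t 1 = 2 * a ∧ N t 0 + N t 1 - 2 * N t 2 = 2 * b)).card = n) :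
    {α ∈ Phi8 | (rc α, sc α) = ((a : ℝ), (b : ℝ))}.ncard = n := by
  rw [sep_image]
  have hset : {t : TT | (rc (g t), sc (g t)) = ((a : ℝ), (b : ℝ))} =
      ↑((univ : Finset TT).filter
        (fun t => N t 0 - N t 1 = 2 * a ∧ N t 0 + N t 1 - 2 * N t 2 = 2 * b)) := by
    ext t
    simp only [Set.mem_setOf_eq, Finset.coe_filter, Finset.mem_univ, true_and, key]
  rw [hset, Set.ncard_image_of_injective _ g_inj, Set.ncard_coe_finset, h]


def cond1 (a b : ℤ) (t : TT) : Prop :=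
  N t 0 - N t 1 = 2 * a ∧ N t 0 + N t 1 - 2 * N t 2 = 2 * b

instance (a b : ℤ) : DecidablePred (cond1 a b) := fun t =>
  inferInstanceAs (Decidable (_ ∧ _))

set_option maxRecDepth 1000000 in
set_option maxHeartbeats 4000000 in
theorem all13 : ∀ t : TT, (N t 0 - N t 1, N t 0 + N t 1 - 2 * N t 2) ∈
    ([(2,2),(2,-2),(-2,2),(-2,-2),(0,4),(0,-4),(0,0),(4,0),(-4,0),(2,6),(2,-6),(-2,6),(-2,-6)]
      : List (ℤ × ℤ)) := by decide

set_option maxRecDepth 1000000 in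
set_option maxHeartbeats 4000000 in
theorem cnt11 : ((univ : Finset TT).filter (fun t => N t 0 - N t 1 = 2 * 1 ∧ N t 0 + N t 1 - 2 * N t 2 = 2 * 1)).card = 27 := by decide
set_option maxRecDepth 1000000 in
set_option maxHeartbeats 4000000 in
theorem cnt12 : ((univ : Finset TT).filter (fun t => N t 0 - N t 1 = 2 * 1 ∧ N t 0 + N t 1 - 2 * N t 2 = 2 * (-1))).card = 27 := by decide
set_option maxRecDepth 1000000 in
set_option maxHeartbeats 4000000 in
theorem cnt13 : ((univ : Finset TT).filter (fun t => N t 0 - N t 1 = 2 * (-1) ∧ N t 0 + N t 1 - 2 * N t 2 = 2 * 1)).card = 27 := by decide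
set_option maxRecDepth 1000000 in
set_option maxHeartbeats 4000000 in
theorem cnt14 : ((univ : Finset TT).filter (fun t => N t 0 - N t 1 = 2 * (-1) ∧ N t 0 + N t 1 - 2 * N t 2 = 2 * (-1))).card = 27 := by decide
set_option maxRecDepth 1000000 in
set_option maxHeartbeats 4000000 in
theorem cnt15 : ((univ : Finset TT).filter (fun t => N t 0 - N t 1 = 2 * 0 ∧ N t 0 + N t 1 - 2 * N t 2 = 2 * 2)).card = 27 := by decide
set_option maxRecDepth 1000000 in
set_option maxHeartbeats 4000000 in
theorem cnt16 : ((univ : Finset TT).filter (fun t => N t 0 - N t 1 = 2 * 0 ∧ N t 0 + N t 1 - 2 * N t 2 = 2 * (-2))).card = 27 := by decide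
set_option maxRecDepth 1000000 in
set_option maxHeartbeats 4000000 in
theorem cnt78 : ((univ : Finset TT).filter (fun t =>
          ¬((N t 0 - N t 1 = 2 * 1 ∧ N t 0 + N t 1 - 2 * N t 2 = 2 * 1) ∨
            (N t 0 - N t 1 = 2 * 1 ∧ N t 0 + N t 1 - 2 * N t 2 = 2 * (-1)) ∨
            (N t 0 - N t 1 = 2 * (-1) ∧ N t 0 + N t 1 - 2 * N t 2 = 2 * 1) ∨
            (N t 0 - N t 1 = 2 * (-1) ∧ N t 0 + N t 1 - 2 * N t 2 = 2 * (-1)) ∨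
            (N t 0 - N t 1 = 2 * 0 ∧ N t 0 + N t 1 - 2 * N t 2 = 2 * 2) ∨
            (N t 0 - N t 1 = 2 * 0 ∧ N t 0 + N t 1 - 2 * N t 2 = 2 * (-2))))).card = 78 := by decide

set_option maxHeartbeats 8000000 in
set_option maxRecDepth 1000000 in
theorem magic_star_projection :
    (∀ α ∈ Phi8, (rc α, sc α) ∈
      tips ∪ ({(0,0), (2,0), (-2,0), (1,3), (1,-3), (-1,3), (-1,-3)} : Set (ℝ × ℝ))) ∧
    (∀ p ∈ tips, {α ∈ Phi8 | (rc α, sc α) = p}.ncard = 27) ∧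
    {α ∈ Phi8 | (rc α, sc α) ∉ tips}.ncard = 78 := by
  refine ⟨?_, ?_, ?_⟩
  · intro α hα
    rw [← range_g] at hα
    obtain ⟨t, rfl⟩ := hα
    have h13 : (N t 0 - N t 1, N t 0 + N t 1 - 2 * N t 2) ∈
        ([(2,2),(2,-2),(-2,2),(-2,-2),(0,4),(0,-4),(0,0),(4,0),(-4,0),(2,6),(2,-6),(-2,6),(-2,-6)]
          : List (ℤ × ℤ)) := by
      exact all13 t
    simp only [List.mem_cons, List.not_mem_nil, or_false, Prod.mk.injEq] at h13
    rcases h13 with ⟨h1,h2⟩|⟨h1,h2⟩|⟨h1,h2⟩|⟨h1,h2⟩|⟨h1,h2⟩|⟨h1,h2⟩|⟨h1,h2⟩|⟨h1,h2⟩|⟨h1,h2⟩|⟨h1,h2⟩|⟨h1,h2⟩|⟨h1,h2⟩|⟨h1,h2⟩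
    · rw [(key t 1 1).mpr ⟨by omega, by omega⟩]
      left
      simp only [tips, Set.mem_insert_iff, Set.mem_singleton_iff]
      norm_num
    · rw [(key t 1 (-1)).mpr ⟨by omega, by omega⟩]
      left
      simp only [tips, Set.mem_insert_iff, Set.mem_singleton_iff]
      norm_num
    · rw [(key t (-1) 1).mpr ⟨by omega, by omega⟩]
      left
      simp only [tips, Set.mem_insert_iff, Set.mem_singleton_iff]
      norm_num
    · rw [(key t (-1) (-1)).mpr ⟨by omega, by omega⟩]
      left
      simp only [tips, Set.mem_insert_iff, Set.mem_singleton_iff]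
      norm_num
    · rw [(key t 0 2).mpr ⟨by omega, by omega⟩]
      left
      simp only [tips, Set.mem_insert_iff, Set.mem_singleton_iff]
      norm_num
    · rw [(key t 0 (-2)).mpr ⟨by omega, by omega⟩]
      left
      simp only [tips, Set.mem_insert_iff, Set.mem_singleton_iff]
      norm_num
    · rw [(key t 0 0).mpr ⟨by omega, by omega⟩]
      right
      simp only [Set.mem_insert_iff, Set.mem_singleton_iff]
      norm_num
    · rw [(key t 2 0).mpr ⟨by omega, by omega⟩]
      right
      simp only [Set.mem_insert_iff, Set.mem_singleton_iff]
      norm_num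
    · rw [(key t (-2) 0).mpr ⟨by omega, by omega⟩]
      right
      simp only [Set.mem_insert_iff, Set.mem_singleton_iff]
      norm_num
    · rw [(key t 1 3).mpr ⟨by omega, by omega⟩]
      right
      simp only [Set.mem_insert_iff, Set.mem_singleton_iff]
      norm_num
    · rw [(key t 1 (-3)).mpr ⟨by omega, by omega⟩]
      right
      simp only [Set.mem_insert_iff, Set.mem_singleton_iff]
      norm_num
    · rw [(key t (-1) 3).mpr ⟨by omega, by omega⟩]
      right
      simp only [Set.mem_insert_iff, Set.mem_singleton_iff]
      norm_num
    · rw [(key t (-1) (-3)).mpr ⟨by omega, by omega⟩]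
      right
      simp only [Set.mem_insert_iff, Set.mem_singleton_iff]
      norm_num
  · intro p hp
    simp only [tips, Set.mem_insert_iff, Set.mem_singleton_iff] at hp
    rcases hp with rfl | rfl | rfl | rfl | rfl | rfl
    · have := tip_count 1 1 27 cnt11
      simpa using this
    · have := tip_count 1 (-1) 27 cnt12
      simpa using this
    · have := tip_count (-1) 1 27 cnt13
      simpa using this
    · have := tip_count (-1) (-1) 27 cnt14
      simpa using this
    · have := tip_count 0 2 27 cnt15
      simpa using this
    · have := tip_count 0 (-2) 27 cnt16
      simpa using this
  · rw [sep_image]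
    have hset : {t : TT | (rc (g t), sc (g t)) ∉ tips} =
        ↑((univ : Finset TT).filter (fun t =>
          ¬((N t 0 - N t 1 = 2 * 1 ∧ N t 0 + N t 1 - 2 * N t 2 = 2 * 1) ∨
            (N t 0 - N t 1 = 2 * 1 ∧ N t 0 + N t 1 - 2 * N t 2 = 2 * (-1)) ∨
            (N t 0 - N t 1 = 2 * (-1) ∧ N t 0 + N t 1 - 2 * N t 2 = 2 * 1) ∨
            (N t 0 - N t 1 = 2 * (-1) ∧ N t 0 + N t 1 - 2 * N t 2 = 2 * (-1)) ∨
            (N t 0 - N t 1 = 2 * 0 ∧ N t 0 + N t 1 - 2 * N t 2 = 2 * 2) ∨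
            (N t 0 - N t 1 = 2 * 0 ∧ N t 0 + N t 1 - 2 * N t 2 = 2 * (-2))))) := by
      ext t
      simp only [Set.mem_setOf_eq, Finset.coe_filter, Finset.mem_univ, true_and,
        tips, Set.mem_insert_iff, Set.mem_singleton_iff]
      rw [show ((1:ℝ),(1:ℝ)) = (((1:ℤ):ℝ), ((1:ℤ):ℝ)) by norm_num,
        show ((1:ℝ),(-1:ℝ)) = (((1:ℤ):ℝ), ((-1:ℤ):ℝ)) by norm_num,
        show ((-1:ℝ),(1:ℝ)) = (((-1:ℤ):ℝ), ((1:ℤ):ℝ)) by norm_num,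
        show ((-1:ℝ),(-1:ℝ)) = (((-1:ℤ):ℝ), ((-1:ℤ):ℝ)) by norm_num,
        show ((0:ℝ),(2:ℝ)) = (((0:ℤ):ℝ), ((2:ℤ):ℝ)) by norm_num,
        show ((0:ℝ),(-2:ℝ)) = (((0:ℤ):ℝ), ((-2:ℤ):ℝ)) by norm_num,
        key, key, key, key, key, key]
    rw [hset, Set.ncard_image_of_injective _ g_inj, Set.ncard_coe_finset]
    exact cnt78
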